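/- Every natural number n ≥ 1 appears exactly once in the combined array consisting of the non-prime seeds together with all rays: ℕ≥1 is the disjoint union of (ℕ≥1 \ P) and the rays r_n over non-prime seeds n. -/
import Mathlib


noncomputable def E (n : ℕ) : ℕ := Nat.nth Nat.Prime (n - 1)

def ray (n : ℕ) : Set ℕ := {x | ∃ k : ℕ, 1 ≤ k ∧ E^[k] n = x}

lemma E_prime (n : ℕ) : (E n).Prime := Nat.prime_nth_prime _

lemma iter_prime {n k : ℕ} (hk : 1 ≤ k) : (E^[k] n).Prime := by
  obtain ⟨j, rfl⟩ := Nat.exists_eq_add_of_le hk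
  rw [add_comm, Function.iterate_succ_apply']
  exact E_prime _

lemma nth_prime_ge (i : ℕ) : i + 2 ≤ Nat.nth Nat.Prime i := by
  induction i with
  | zero => exact (Nat.prime_nth_prime 0).two_le
  | succ j ih =>
      have h : Nat.nth Nat.Prime j < Nat.nth Nat.Prime (j + 1) :=
        (Nat.nth_lt_nth Nat.infinite_setOf_prime).mpr (Nat.lt_succ_self j)
      omega

lemma E_inj {a b : ℕ} (ha : 1 ≤ a) (hb : 1 ≤ b) (h : E a = E b) : a = b := by
  have := Nat.nth_injective Nat.infinite_setOf_prime h
  omega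

noncomputable def pre (x : ℕ) : ℕ := Nat.count Nat.Prime x + 1

lemma E_pre {x : ℕ} (hx : x.Prime) : E (pre x) = x := by
  simpa [E, pre] using Nat.nth_count (p := Nat.Prime) hx

lemma pre_lt {x : ℕ} (hx : x.Prime) : pre x < x := by
  have h1 : Nat.count Nat.Prime x + 2 ≤ Nat.nth Nat.Prime (Nat.count Nat.Prime x) :=
    nth_prime_ge _
  have h2 : Nat.nth Nat.Prime (Nat.count Nat.Prime x) = x := Nat.nth_count hx
  unfold pre; omega

lemma key : ∀ x : ℕ, x.Prime →
    ∃! nk : ℕ × ℕ, 1 ≤ nk.1 ∧ ¬ nk.1.Prime ∧ 1 ≤ nk.2 ∧ E^[nk.2] nk.1 = x := by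
  intro x
  induction x using Nat.strong_induction_on with
  | _ x ih =>
    intro hx
    -- any witness (n', k') must have E^[k'-1] n' = pre x
    have step : ∀ n' k' : ℕ, 1 ≤ n' → 1 ≤ k' → E^[k'] n' = x →
        E^[k' - 1] n' = pre x := by
      intro n' k' hn' hk' heq
      obtain ⟨j, rfl⟩ := Nat.exists_eq_add_of_le hk'
      rw [add_comm, Function.iterate_succ_apply'] at heq
      have hy1 : 1 ≤ E^[j] n' := by
        rcases Nat.eq_zero_or_pos j with rfl | hj
        · simpa using hn'
        · exact (iter_prime hj).one_lt.le.trans' (by omega)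
      have : E^[j] n' = pre x := E_inj hy1 (by simp [pre]) (heq.trans (E_pre hx).symm)
      simpa using this
    by_cases hp : (pre x).Prime
    · obtain ⟨⟨n, k⟩, ⟨hn1, hn2, hk1, hk2⟩, huniq⟩ := ih (pre x) (pre_lt hx) hp
      refine ⟨(n, k + 1), ⟨hn1, hn2, by omega, ?_⟩, ?_⟩
      · rw [Function.iterate_succ_apply', hk2, E_pre hx]
      · rintro ⟨n', k'⟩ ⟨h1, h2, h3, h4⟩
        have hs := step n' k' h1 h3 h4
        have hk'2 : 2 ≤ k' := by
          rcases Nat.lt_or_ge k' 2 with h | h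
          · interval_cases k' <;> simp_all
          · exact h
        have := huniq (n', k' - 1) ⟨h1, h2, by omega, hs⟩
        have h5 : n' = n := by simpa using congrArg Prod.fst this
        have h6 : k' - 1 = k := by simpa using congrArg Prod.snd this
        simp [h5]; omega
    · refine ⟨(pre x, 1), ⟨by simp [pre], hp, le_refl 1, by simpa using E_pre hx⟩, ?_⟩
      rintro ⟨n', k'⟩ ⟨h1, h2, h3, h4⟩
      have hs := step n' k' h1 h3 h4
      have hk' : k' = 1 := by
        by_contra h
        have hk2 : 2 ≤ k' := by omega
        have : (E^[k' - 1] n').Prime := iter_prime (by omega)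
        rw [hs] at this; exact hp this
      subst hk'
      simpa using hs

theorem naturals_partitioned_by_seeds_and_rays :
    ({x : ℕ | 1 ≤ x} =
      {x : ℕ | 1 ≤ x ∧ ¬ x.Prime} ∪ ⋃ n ∈ {n : ℕ | 1 ≤ n ∧ ¬ n.Prime}, ray n) ∧
    Disjoint {x : ℕ | 1 ≤ x ∧ ¬ x.Prime}
      (⋃ n ∈ {n : ℕ | 1 ≤ n ∧ ¬ n.Prime}, ray n) ∧
    (∀ x : ℕ, 1 ≤ x → x.Prime →
      ∃! nk : ℕ × ℕ, 1 ≤ nk.1 ∧ ¬ nk.1.Prime ∧ 1 ≤ nk.2 ∧ E^[nk.2] nk.1 = x) := by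
  refine ⟨?_, ?_, fun x _ hx => key x hx⟩
  · ext x
    simp only [Set.mem_setOf_eq, Set.mem_union, Set.mem_iUnion, ray, Set.mem_setOf_eq]
    constructor
    · intro hx1
      by_cases hp : x.Prime
      · obtain ⟨⟨n, k⟩, ⟨hn1, hn2, hk1, hk2⟩, _⟩ := key x hp
        exact Or.inr ⟨n, ⟨hn1, hn2⟩, k, hk1, hk2⟩
      · exact Or.inl ⟨hx1, hp⟩
    · rintro (⟨h, _⟩ | ⟨n, _, k, hk1, hk2⟩)
      · exact h
      · exact hk2 ▸ (iter_prime hk1).one_lt.le.trans' (by omega)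
  · rw [Set.disjoint_left]
    rintro x ⟨_, hnp⟩ hx
    simp only [Set.mem_iUnion, ray, Set.mem_setOf_eq] at hx
    obtain ⟨n, _, k, hk1, hk2⟩ := hx
    exact hnp (hk2 ▸ iter_prime hk1)
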